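/- Let f = Σ_{β ∈ I(n,d)} f_β x^β be a homogeneous polynomial of degree d ≥ 1 in n variables with real coefficients and let r ≥ d be an integer. Then f_{Δ(n,r)} − f_min^{(r−d)} ≤ [((r+d−1)^{(d)} − r^d) / r^{(d)}] · C(2d−1, d) · d^d · (f̄ − f̲), where C(2d−1,d) is the binomial coefficient and (r+d−1)^{(d)} = (r+d−1)(r+d−2)···r. -/

import Mathlib

open Finset

noncomputable section

/-- Falling factorial `t^(d) = t (t-1) ⋯ (t-d+1)`. -/
def fall (t : ℝ) : ℕ → ℝ
  | 0 => 1
  | d + 1 => fall t d * (t - (d : ℝ))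

/-- The regular grid `Δ(n,r) = {x ∈ Δ_n : r·x ∈ ℕ^n}`. -/
def regularGrid (n r : ℕ) : Set (Fin n → ℝ) :=
  {x ∈ stdSimplex ℝ (Fin n) | ∀ i, ∃ k : ℕ, (r : ℝ) * x i = (k : ℝ)}

/-- `f_{Δ(n,r)}`, the minimum of `f` over the regular grid. -/
def minGrid (n r : ℕ) (f : (Fin n → ℝ) → ℝ) : ℝ :=
  sInf (f '' regularGrid n r)

/-- `f̲`, the minimum of `f` over the standard simplex. -/
def minSimplex (n : ℕ) (f : (Fin n → ℝ) → ℝ) : ℝ :=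
  sInf (f '' stdSimplex ℝ (Fin n))

/-- `f̄`, the maximum of `f` over the standard simplex. -/
def maxSimplex (n : ℕ) (f : (Fin n → ℝ) → ℝ) : ℝ :=
  sSup (f '' stdSimplex ℝ (Fin n))

/-- The homogeneous polynomial of degree `d` with coefficients `c`,
`f(x) = Σ_{β ∈ I(n,d)} c_β x^β`. -/
def homPoly (n d : ℕ) (c : (Fin n → ℕ) → ℝ) (x : Fin n → ℝ) : ℝ :=
  ∑ β ∈ Finset.Nat.antidiagonalTuple n d, c β * ∏ i, x i ^ β i

/-- The Pólya-type lower bound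
`f_min^{(r-d)} = min_{α ∈ I(n,r)} Σ_{β ∈ I(n,d)} c_β α^{(β)} / r^{(d)}`. -/
def polyaBound (n d r : ℕ) (c : (Fin n → ℕ) → ℝ) : ℝ :=
  sInf ((fun α : Fin n → ℕ =>
      (∑ β ∈ Finset.Nat.antidiagonalTuple n d,
        c β * ∏ i, fall ((α i : ℕ) : ℝ) (β i)) / fall (r : ℝ) d) ''
    {α : Fin n → ℕ | ∑ i, α i = r})

namespace S11

lemma fall_natCast (a : ℕ) : ∀ e : ℕ, fall (a : ℝ) e = (a.descFactorial e : ℝ)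
  | 0 => by simp [fall]
  | e + 1 => by
    rw [fall, fall_natCast a e, Nat.descFactorial]
    rcases lt_trichotomy e a with h | h | h
    · rw [Nat.cast_mul, Nat.cast_sub h.le]; ring
    · subst h; simp
    · rw [Nat.descFactorial_eq_zero_iff_lt.2 h]
      simp [Nat.sub_eq_zero_of_le h.le]

/-- Alternating finite-difference sum of `g ↦ g^e`. -/
def T (b e : ℕ) : ℝ := ∑ g ∈ range (b + 1), (-1 : ℝ) ^ (b - g) * (b.choose g : ℝ) * (g : ℝ) ^ e

lemma T_rec (b e : ℕ) : T (b + 1) e = ∑ j ∈ range e, (e.choose j : ℝ) * T b j := by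
  have key : ∀ h ∈ range (b + 1),
      (-1:ℝ)^(b-h) * (b.choose (h+1) : ℝ) * ((h:ℝ)+1)^e
        = - ((-1:ℝ)^(b-(h+1)) * (b.choose (h+1) : ℝ) * (((h:ℝ)+1))^e) := by
    intro h hh
    rw [mem_range] at hh
    rcases le_or_gt (h+1) b with hb | hb
    · have : b - h = (b - (h+1)) + 1 := by omega
      rw [this, pow_succ]; ring
    · rw [Nat.choose_eq_zero_of_lt hb]; simp
  have h2 : ∑ h ∈ range (b + 1), (-1:ℝ)^(b-h) * (b.choose (h+1) : ℝ) * ((h:ℝ)+1)^e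
      = - T b e - (-1:ℝ)^(b+1) * (0:ℝ)^e := by
    have s1 : ∑ g ∈ range (b + 2), - ((-1:ℝ)^(b-g) * (b.choose g : ℝ) * (g:ℝ)^e)
        = (∑ h ∈ range (b + 1), (-1:ℝ)^(b-h) * (b.choose (h+1) : ℝ) * ((h:ℝ)+1)^e)
          + (-1:ℝ)^(b+1) * (0:ℝ)^e := by
      rw [Finset.sum_range_succ' (fun g => - ((-1:ℝ)^(b-g) * (b.choose g : ℝ) * (g:ℝ)^e))]
      push_cast
      rw [Finset.sum_congr rfl (fun h hh => (key h hh).symm)]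
      rw [pow_succ]
      simp
    have s2 : ∑ g ∈ range (b + 2), - ((-1:ℝ)^(b-g) * (b.choose g : ℝ) * (g:ℝ)^e)
        = - T b e := by
      rw [Finset.sum_range_succ, Nat.choose_eq_zero_of_lt (by omega : b < b + 1)]
      simp [T]
    rw [s2] at s1
    linarith [s1]
  have h1 : T (b + 1) e
      = (∑ h ∈ range (b + 1), (-1:ℝ)^(b-h) * (b.choose h : ℝ) * ((h:ℝ)+1)^e)
        + ((∑ h ∈ range (b + 1), (-1:ℝ)^(b-h) * (b.choose (h+1) : ℝ) * ((h:ℝ)+1)^e)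
            + (-1:ℝ)^(b+1) * (0:ℝ)^e) := by
    rw [T, Finset.sum_range_succ']
    push_cast [Nat.choose_succ_succ, Nat.succ_sub_succ]
    rw [Finset.sum_congr rfl (fun (h : ℕ) (_ : h ∈ range (b+1)) => by
      ring : ∀ h ∈ range (b+1), ((-1:ℝ)^(b-h) * ((b.choose h : ℝ) + (b.choose (h+1) : ℝ)) * ((h:ℝ)+1)^e)
        = (-1:ℝ)^(b-h) * (b.choose h : ℝ) * ((h:ℝ)+1)^e
          + (-1:ℝ)^(b-h) * (b.choose (h+1) : ℝ) * ((h:ℝ)+1)^e)]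
    rw [Finset.sum_add_distrib]
    push_cast
    ring_nf
    norm_num [Nat.choose_zero_right]
  rw [h1, h2]
  have h3 : ∑ h ∈ range (b + 1), (-1:ℝ)^(b-h) * (b.choose h : ℝ) * ((h:ℝ)+1)^e
      = ∑ j ∈ range (e+1), (e.choose j : ℝ) * T b j := by
    have expand : ∀ h : ℕ, ((h:ℝ)+1)^e = ∑ j ∈ range (e+1), (h:ℝ)^j * (e.choose j : ℝ) := by
      intro h
      simpa using add_pow (h : ℝ) 1 e
    rw [Finset.sum_congr rfl (fun h _ => by rw [expand h])]
    simp only [Finset.mul_sum]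
    rw [Finset.sum_comm]
    apply Finset.sum_congr rfl
    intro j _
    rw [T, Finset.mul_sum]
    apply Finset.sum_congr rfl
    intro g _
    ring
  rw [h3, Finset.sum_range_succ]
  simp only [Nat.choose_self, Nat.cast_one, one_mul]
  ring


lemma T_spec : ∀ b : ℕ, (∀ e, e < b → T b e = 0) ∧ T b b = (b.factorial : ℝ) := by
  intro b
  induction b with
  | zero =>
    refine ⟨fun e he => absurd he (by omega), ?_⟩
    simp [T]
  | succ b ih =>
    refine ⟨fun e he => ?_, ?_⟩
    · rw [T_rec]
      exact Finset.sum_eq_zero fun j hj => by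
        rw [ih.1 j (by have := mem_range.1 hj; omega), mul_zero]
    · rw [T_rec, Finset.sum_range_succ]
      have hz : ∑ j ∈ range b, ((b+1).choose j : ℝ) * T b j = 0 :=
        Finset.sum_eq_zero fun j hj => by rw [ih.1 j (mem_range.1 hj), mul_zero]
      rw [hz, zero_add, ih.2, Nat.choose_succ_self_right]
      push_cast [Nat.factorial_succ]
      ring

/-- Multivariate Vandermonde for binomial coefficients. -/
lemma vandermonde_multi {ι : Type*} [DecidableEq ι] (s : Finset ι) (f : ι → ℕ) (m : ℕ) :
    ∑ k ∈ s.piAntidiag m, ∏ i ∈ s, (f i).choose (k i) = (∑ i ∈ s, f i).choose m := by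
  classical
  induction s using Finset.cons_induction generalizing m with
  | empty =>
    rcases Nat.eq_zero_or_pos m with rfl | hm
    · simp
    · rw [Finset.piAntidiag_empty_of_ne_zero (by omega)]
      simp [Nat.choose_eq_zero_of_lt hm]
  | cons a s has ih =>
    rw [Finset.piAntidiag_cons has, Finset.sum_disjiUnion, Finset.sum_cons,
      Nat.add_choose_eq]
    apply Finset.sum_congr rfl
    intro p hp
    rw [Finset.sum_map]
    have : ∀ g ∈ s.piAntidiag p.2,
        ∏ i ∈ cons a s has,
          (f i).choose ((addRightEmbedding fun t => if t = a then p.1 else 0) g i)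
          = (f a).choose p.1 * ∏ i ∈ s, (f i).choose (g i) := by
      intro g hg
      rw [Finset.mem_piAntidiag] at hg
      rw [Finset.prod_cons]
      have hga : g a = 0 := by
        by_contra h
        exact has (hg.2 a h)
      congr 1
      · simp [addRightEmbedding, hga]
      · apply Finset.prod_congr rfl
        intro i hi
        have : i ≠ a := fun h => has (h ▸ hi)
        simp [addRightEmbedding, this]
    rw [Finset.sum_congr rfl this, ← Finset.mul_sum, ih]

lemma antidiagonalTuple_eq_piAntidiag (n m : ℕ) :
    Finset.Nat.antidiagonalTuple n m = Finset.piAntidiag (univ : Finset (Fin n)) m := by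
  ext β
  simp [Finset.Nat.mem_antidiagonalTuple, Finset.mem_piAntidiag]

lemma multinomial_mul_desc {n : ℕ} (α β : Fin n → ℕ) (d : ℕ) (hβ : ∑ i, β i = d) :
    Nat.multinomial univ β * ∏ i, (α i).descFactorial (β i)
      = d.factorial * ∏ i, (α i).choose (β i) := by
  have h1 : ∏ i, (α i).descFactorial (β i)
      = (∏ i, (β i).factorial) * ∏ i, (α i).choose (β i) := by
    rw [← Finset.prod_mul_distrib]
    exact Finset.prod_congr rfl fun i _ => Nat.descFactorial_eq_factorial_mul_choose _ _
  rw [h1, ← mul_assoc, mul_comm (Nat.multinomial univ β) _, Nat.multinomial_spec, hβ]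

lemma sumB {n : ℕ} (d : ℕ) (α : Fin n → ℕ) :
    ∑ β ∈ Finset.Nat.antidiagonalTuple n d,
      Nat.multinomial univ β * ∏ i, (α i).descFactorial (β i)
      = (∑ i, α i).descFactorial d := by
  rw [Finset.sum_congr rfl (fun β hβ => multinomial_mul_desc α β d
    (Finset.Nat.mem_antidiagonalTuple.1 hβ)), ← Finset.mul_sum,
    antidiagonalTuple_eq_piAntidiag, vandermonde_multi,
    Nat.descFactorial_eq_factorial_mul_choose]

lemma sumA {n : ℕ} (d : ℕ) (α : Fin n → ℕ) :
    ∑ β ∈ Finset.Nat.antidiagonalTuple n d,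
      Nat.multinomial univ β * ∏ i, (α i) ^ (β i) = (∑ i, α i) ^ d := by
  rw [antidiagonalTuple_eq_piAntidiag]
  exact (Finset.sum_pow_eq_sum_piAntidiag (univ : Finset (Fin n)) α d).symm

lemma homPoly_multinomial {n : ℕ} (d : ℕ) (x : Fin n → ℝ) :
    homPoly n d (fun δ => (Nat.multinomial univ δ : ℝ)) x = (∑ i, x i) ^ d := by
  rw [homPoly, antidiagonalTuple_eq_piAntidiag]
  exact (Finset.sum_pow_eq_sum_piAntidiag (univ : Finset (Fin n)) x d).symm

/-- The box `{γ : γ ≤ β}`. -/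
def box {n : ℕ} (β : Fin n → ℕ) : Finset (Fin n → ℕ) :=
  Fintype.piFinset fun i => range (β i + 1)

/-- Signed product of binomial weights. -/
def w {n : ℕ} (β γ : Fin n → ℕ) : ℝ :=
  ∏ i, ((-1 : ℝ) ^ (β i - γ i) * ((β i).choose (γ i) : ℝ))

lemma exists_lt_of_ne {n : ℕ} {β δ : Fin n → ℕ} (hs : ∑ i, δ i = ∑ i, β i)
    (hne : δ ≠ β) : ∃ i, δ i < β i := by
  by_contra h
  push_neg at h
  apply hne
  funext i
  have := (Finset.sum_eq_sum_iff_of_le (fun i _ => h i)).1 hs.symm i (Finset.mem_univ i)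
  omega

lemma findiff {n : ℕ} (d : ℕ) (c : (Fin n → ℕ) → ℝ) (β : Fin n → ℕ)
    (hβd : ∑ i, β i = d) :
    ∑ γ ∈ box β, w β γ * homPoly n d c (fun i => (γ i : ℝ))
      = (∏ i, ((β i).factorial : ℝ)) * c β := by
  have hβmem : β ∈ Finset.Nat.antidiagonalTuple n d :=
    Finset.Nat.mem_antidiagonalTuple.2 hβd
  unfold homPoly
  have step1 : ∀ γ : Fin n → ℕ,
      w β γ * (∑ δ ∈ Finset.Nat.antidiagonalTuple n d, c δ * ∏ i, ((γ i : ℝ)) ^ δ i)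
        = ∑ δ ∈ Finset.Nat.antidiagonalTuple n d,
            c δ * ∏ i, ((-1:ℝ) ^ (β i - γ i) * ((β i).choose (γ i) : ℝ) * (γ i : ℝ) ^ δ i) := by
    intro γ
    rw [Finset.mul_sum]
    apply Finset.sum_congr rfl
    intro δ _
    rw [w, mul_left_comm, ← Finset.prod_mul_distrib]
  rw [Finset.sum_congr rfl fun γ _ => step1 γ, Finset.sum_comm]
  have step2 : ∀ δ : Fin n → ℕ,
      ∑ γ ∈ box β, c δ * ∏ i, ((-1:ℝ) ^ (β i - γ i) * ((β i).choose (γ i) : ℝ) * (γ i : ℝ) ^ δ i)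
        = c δ * ∏ i, T (β i) (δ i) := by
    intro δ
    rw [← Finset.mul_sum]
    congr 1
    have hps := Finset.prod_univ_sum (fun i => range (β i + 1))
      (fun i g => (-1:ℝ)^(β i - g) * ((β i).choose g : ℝ) * (g:ℝ)^(δ i))
    rw [box, ← hps]
    apply Finset.prod_congr rfl
    intro i _
    rw [T]
  rw [Finset.sum_congr rfl fun δ _ => step2 δ]
  rw [Finset.sum_eq_single_of_mem β hβmem]
  · rw [Finset.prod_congr rfl fun i _ => (T_spec (β i)).2, mul_comm]
  · intro δ hδ hne
    obtain ⟨i, hi⟩ := exists_lt_of_ne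
      (by rw [Finset.Nat.mem_antidiagonalTuple.1 hδ, hβd]) hne
    rw [Finset.prod_eq_zero (Finset.mem_univ i) ((T_spec (β i)).1 (δ i) hi), mul_zero]

lemma findiff_sigma {n : ℕ} (d : ℕ) (β : Fin n → ℕ) (hβd : ∑ i, β i = d) :
    ∑ γ ∈ box β, w β γ * (∑ i, (γ i : ℝ)) ^ d = (d.factorial : ℝ) := by
  have := findiff d (fun δ => (Nat.multinomial univ δ : ℝ)) β hβd
  rw [Finset.sum_congr rfl (fun γ _ => by rw [homPoly_multinomial])] at this
  rw [this]
  have := Nat.multinomial_spec univ β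
  rw [hβd] at this
  push_cast [← this]
  ring

lemma continuous_homPoly (n d : ℕ) (c : (Fin n → ℕ) → ℝ) : Continuous (homPoly n d c) := by
  unfold homPoly
  exact continuous_finset_sum _ fun β _ =>
    continuous_const.mul (continuous_finset_prod _ fun i _ => (continuous_apply i).pow _)

lemma image_simplex_compact (n d : ℕ) (c : (Fin n → ℕ) → ℝ) :
    IsCompact (homPoly n d c '' stdSimplex ℝ (Fin n)) :=
  (isCompact_stdSimplex ℝ (Fin n)).image (continuous_homPoly n d c)

lemma minSimplex_le {n d : ℕ} {c : (Fin n → ℕ) → ℝ} {x : Fin n → ℝ}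
    (hx : x ∈ stdSimplex ℝ (Fin n)) : minSimplex n (homPoly n d c) ≤ homPoly n d c x :=
  csInf_le (image_simplex_compact n d c).bddBelow ⟨x, hx, rfl⟩

lemma le_maxSimplex {n d : ℕ} {c : (Fin n → ℕ) → ℝ} {x : Fin n → ℝ}
    (hx : x ∈ stdSimplex ℝ (Fin n)) : homPoly n d c x ≤ maxSimplex n (homPoly n d c) :=
  le_csSup (image_simplex_compact n d c).bddAbove ⟨x, hx, rfl⟩

lemma simplex_nonempty {n : ℕ} (hn : 0 < n) : (stdSimplex ℝ (Fin n)).Nonempty := by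
  refine ⟨fun i => if i = ⟨0, hn⟩ then 1 else 0, fun i => ?_, ?_⟩
  · dsimp only; split <;> norm_num
  · simp

lemma gap_nonneg {n d : ℕ} (hn : 0 < n) (c : (Fin n → ℕ) → ℝ) :
    0 ≤ maxSimplex n (homPoly n d c) - minSimplex n (homPoly n d c) := by
  obtain ⟨x, hx⟩ := simplex_nonempty hn
  have := minSimplex_le (d := d) (c := c) hx
  have := le_maxSimplex (d := d) (c := c) hx
  linarith

lemma homPoly_smul {n d : ℕ} (c : (Fin n → ℕ) → ℝ) (t : ℝ) (x : Fin n → ℝ) :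
    homPoly n d c (fun i => t * x i) = t ^ d * homPoly n d c x := by
  unfold homPoly
  rw [Finset.mul_sum]
  apply Finset.sum_congr rfl
  intro β hβ
  have hs : ∑ i, β i = d := Finset.Nat.mem_antidiagonalTuple.1 hβ
  rw [show (∏ i, (t * x i) ^ β i) = (∏ i, t ^ β i) * ∏ i, x i ^ β i by
      rw [← Finset.prod_mul_distrib]; exact Finset.prod_congr rfl fun i _ => mul_pow _ _ _,
    Finset.prod_pow_eq_pow_sum, hs]
  ring

/-- value bounds at integer points -/
lemma value_bounds {n d : ℕ} (hn : 0 < n) (hd : 1 ≤ d) (c : (Fin n → ℕ) → ℝ)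
    (γ : Fin n → ℕ) :
    minSimplex n (homPoly n d c) * ((∑ i, γ i : ℕ) : ℝ) ^ d
        ≤ homPoly n d c (fun i => (γ i : ℝ)) ∧
      homPoly n d c (fun i => (γ i : ℝ))
        ≤ maxSimplex n (homPoly n d c) * ((∑ i, γ i : ℕ) : ℝ) ^ d := by
  set e : ℕ := ∑ i, γ i with he
  rcases Nat.eq_zero_or_pos e with h0 | hpos
  · have hsz : ∑ i, γ i = 0 := by rw [← he]; exact h0
    have hγ : ∀ i, γ i = 0 := fun i =>
      Finset.sum_eq_zero_iff.1 hsz i (Finset.mem_univ i)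
    have hfun : (fun i => (γ i : ℝ)) = fun _ : Fin n => (0:ℝ) :=
      funext fun i => by rw [hγ i]; simp
    have hF0 : homPoly n d c (fun i => (γ i : ℝ)) = 0 := by
      rw [hfun]
      unfold homPoly
      apply Finset.sum_eq_zero
      intro β hβ
      have hs : ∑ i, β i = d := Finset.Nat.mem_antidiagonalTuple.1 hβ
      obtain ⟨i, hi⟩ : ∃ i, β i ≠ 0 := by
        by_contra hall
        push_neg at hall
        rw [Finset.sum_eq_zero (fun i _ => hall i)] at hs
        omega
      rw [Finset.prod_eq_zero (Finset.mem_univ i) (by simp [zero_pow hi]), mul_zero]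
    rw [hF0, h0]
    norm_num [zero_pow (show d ≠ 0 by omega)]
  · have hex : (0:ℝ) < (e:ℝ) := by exact_mod_cast hpos
    set x : Fin n → ℝ := fun i => (γ i : ℝ) / e with hx
    have hmem : x ∈ stdSimplex ℝ (Fin n) := by
      constructor
      · intro i; positivity
      · rw [hx]
        rw [← Finset.sum_div]
        rw [show ∑ i, ((γ i : ℕ):ℝ) = (e:ℝ) by rw [he]; push_cast; rfl]
        field_simp
    have heq : homPoly n d c (fun i => (γ i : ℝ)) = (e:ℝ)^d * homPoly n d c x := by
      rw [← homPoly_smul]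
      congr 1
      funext i
      rw [hx]
      field_simp
    constructor
    · rw [heq, mul_comm (minSimplex n (homPoly n d c)) _]
      exact mul_le_mul_of_nonneg_left (minSimplex_le hmem) (by positivity)
    · rw [heq, mul_comm (maxSimplex n (homPoly n d c)) _]
      exact mul_le_mul_of_nonneg_left (le_maxSimplex hmem) (by positivity)

/-- normalized coefficient `b_β = c_β β! / d!` -/
def bco {n : ℕ} (d : ℕ) (c : (Fin n → ℕ) → ℝ) (β : Fin n → ℕ) : ℝ :=
  c β * (∏ i, ((β i).factorial : ℝ)) / (d.factorial : ℝ)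

lemma mult_mul_bco {n d : ℕ} (c : (Fin n → ℕ) → ℝ) {β : Fin n → ℕ}
    (hβd : ∑ i, β i = d) :
    (Nat.multinomial univ β : ℝ) * bco d c β = c β := by
  have hspec := Nat.multinomial_spec univ β
  rw [hβd] at hspec
  have hcast : ((∏ i, (β i).factorial : ℕ) : ℝ) * (Nat.multinomial univ β : ℝ)
      = (d.factorial : ℝ) := by exact_mod_cast congrArg (Nat.cast (R := ℝ)) hspec
  push_cast at hcast
  rw [bco]
  have hdf : (d.factorial : ℝ) ≠ 0 := by positivity
  field_simp
  linear_combination c β * hcast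

lemma boxsum_choose {n d : ℕ} {β : Fin n → ℕ} (hβd : ∑ i, β i = d) :
    ∑ γ ∈ box β, (∏ i, (((β i).choose (γ i) : ℕ) : ℝ)) = 2 ^ d := by
  have hps := Finset.prod_univ_sum (fun i => range (β i + 1))
    (fun (i : Fin n) (g : ℕ) => (((β i).choose g : ℕ) : ℝ))
  rw [box, ← hps]
  have : ∀ i : Fin n, ∑ g ∈ range (β i + 1), (((β i).choose g : ℕ) : ℝ) = 2 ^ β i := by
    intro i
    rw [← Nat.cast_sum]
    rw [Nat.sum_range_choose]
    push_cast
    rfl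
  rw [Finset.prod_congr rfl fun i _ => this i, Finset.prod_pow_eq_pow_sum, hβd]

lemma abs_w_eq {n : ℕ} (β γ : Fin n → ℕ) :
    |w β γ| = ∏ i, (((β i).choose (γ i) : ℕ) : ℝ) := by
  rw [w, Finset.abs_prod]
  apply Finset.prod_congr rfl
  intro i _
  rw [abs_mul, abs_pow, abs_neg, abs_one, one_pow, one_mul, Nat.abs_cast]

lemma mem_box_le {n : ℕ} {β γ : Fin n → ℕ} (h : γ ∈ box β) : ∀ i, γ i ≤ β i := by
  intro i
  have := Fintype.mem_piFinset.1 h i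
  rw [Finset.mem_range] at this
  omega

lemma bco_bounds {n d : ℕ} (hn : 0 < n) (hd : 1 ≤ d) (c : (Fin n → ℕ) → ℝ)
    {β : Fin n → ℕ} (hβd : ∑ i, β i = d) :
    (d.factorial : ℝ) * (bco d c β - minSimplex n (homPoly n d c))
        ≤ (maxSimplex n (homPoly n d c) - minSimplex n (homPoly n d c)) *
            ((d:ℝ)^d + 2^d * (((d-1 : ℕ)):ℝ)^d) ∧
      (d.factorial : ℝ) * (minSimplex n (homPoly n d c) - bco d c β)
        ≤ (maxSimplex n (homPoly n d c) - minSimplex n (homPoly n d c)) *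
            (2^d * (((d-1 : ℕ)):ℝ)^d) := by
  set A := minSimplex n (homPoly n d c) with hA
  set B := maxSimplex n (homPoly n d c) with hB
  have hgap : 0 ≤ B - A := gap_nonneg hn c
  set G : (Fin n → ℕ) → ℝ :=
    fun γ => homPoly n d c (fun i => (γ i : ℝ)) - A * ((∑ i, γ i : ℕ) : ℝ) ^ d with hG
  have hG0 : ∀ γ, 0 ≤ G γ := by
    intro γ
    have := (value_bounds hn hd c γ).1
    rw [hG]; dsimp only; linarith
  have hGle : ∀ γ, G γ ≤ (B - A) * ((∑ i, γ i : ℕ) : ℝ) ^ d := by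
    intro γ
    have := (value_bounds hn hd c γ).2
    rw [hG]; dsimp only; nlinarith []
  -- main identity
  have hid : (d.factorial : ℝ) * (bco d c β - A) = ∑ γ ∈ box β, w β γ * G γ := by
    have h1 := findiff d c β hβd
    have h2 := findiff_sigma d β hβd
    have hbco : (d.factorial : ℝ) * bco d c β = (∏ i, ((β i).factorial : ℝ)) * c β := by
      rw [bco]
      have hdf : (d.factorial : ℝ) ≠ 0 := by positivity
      field_simp
    rw [hG]
    simp only [mul_sub]
    rw [Finset.sum_sub_distrib]
    rw [show ∑ γ ∈ box β, w β γ * (A * ((∑ i, γ i : ℕ) : ℝ) ^ d)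
        = A * ∑ γ ∈ box β, w β γ * ((∑ i, γ i : ℕ) : ℝ) ^ d by
      rw [Finset.mul_sum]; exact Finset.sum_congr rfl fun γ _ => by push_cast; ring]
    rw [show ∑ γ ∈ box β, w β γ * ((∑ i, γ i : ℕ) : ℝ) ^ d = (d.factorial : ℝ) by
      rw [← h2]; exact Finset.sum_congr rfl fun γ _ => by push_cast; ring]
    rw [hbco, h1]
    ring
  have hβbox : β ∈ box β := by
    rw [box, Fintype.mem_piFinset]
    intro i; rw [Finset.mem_range]; omega
  have hwββ : w β β = 1 := by
    rw [w]
    apply Finset.prod_eq_one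
    intro i _
    simp
  -- erase sum bound, for v = w and v = -w
  have herase : ∀ v : (Fin n → ℕ) → ℝ, (∀ γ, |v γ| = |w β γ|) →
      ∑ γ ∈ (box β).erase β, v γ * G γ ≤ (B - A) * (2^d * (((d-1 : ℕ)):ℝ)^d) := by
    intro v hv
    have hle : ∀ γ ∈ (box β).erase β,
        v γ * G γ ≤ (∏ i, (((β i).choose (γ i) : ℕ) : ℝ)) * ((B - A) * (((d-1 : ℕ)):ℝ)^d) := by
      intro γ hγ
      have hγb := Finset.mem_of_mem_erase hγ
      have hne : γ ≠ β := Finset.ne_of_mem_erase hγ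
      have hγle := mem_box_le hγb
      have hsum_lt : ∑ i, γ i ≤ d - 1 := by
        have hlt : ∑ i, γ i < ∑ i, β i := by
          apply Finset.sum_lt_sum (fun i _ => hγle i)
          by_contra hno
          push_neg at hno
          exact hne (funext fun i => le_antisymm (hγle i) (hno i (Finset.mem_univ i)))
        omega
      have h1 : v γ * G γ ≤ |v γ| * G γ :=
        mul_le_mul_of_nonneg_right (le_abs_self _) (hG0 γ)
      have h2 : |v γ| = ∏ i, (((β i).choose (γ i) : ℕ) : ℝ) := by rw [hv, abs_w_eq]
      have h3 : G γ ≤ (B - A) * (((d-1 : ℕ)):ℝ)^d := by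
        refine (hGle γ).trans ?_
        apply mul_le_mul_of_nonneg_left _ hgap
        apply pow_le_pow_left₀ (by positivity)
        exact_mod_cast hsum_lt
      calc v γ * G γ ≤ |v γ| * G γ := h1
        _ ≤ |v γ| * ((B - A) * (((d-1 : ℕ)):ℝ)^d) :=
            mul_le_mul_of_nonneg_left h3 (abs_nonneg _)
        _ = (∏ i, (((β i).choose (γ i) : ℕ) : ℝ)) * ((B - A) * (((d-1 : ℕ)):ℝ)^d) := by
            rw [h2]
    refine (Finset.sum_le_sum hle).trans ?_
    rw [← Finset.sum_mul]
    have hs : ∑ γ ∈ (box β).erase β, (∏ i, (((β i).choose (γ i) : ℕ) : ℝ))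
        ≤ ∑ γ ∈ box β, (∏ i, (((β i).choose (γ i) : ℕ) : ℝ)) := by
      apply Finset.sum_le_sum_of_subset_of_nonneg (Finset.erase_subset _ _)
      intro γ _ _
      positivity
    rw [boxsum_choose hβd] at hs
    calc (∑ γ ∈ (box β).erase β, ∏ i, (((β i).choose (γ i) : ℕ) : ℝ))
          * ((B - A) * (((d-1 : ℕ)):ℝ)^d)
        ≤ 2^d * ((B - A) * (((d-1 : ℕ)):ℝ)^d) := by
          apply mul_le_mul_of_nonneg_right hs (by positivity)
      _ = (B - A) * (2^d * (((d-1 : ℕ)):ℝ)^d) := by ring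
  have hsplit : ∑ γ ∈ box β, w β γ * G γ
      = G β + ∑ γ ∈ (box β).erase β, w β γ * G γ := by
    rw [← Finset.add_sum_erase _ _ hβbox, hwββ, one_mul]
  constructor
  · rw [hid, hsplit]
    have h1 : G β ≤ (B - A) * ((d:ℝ))^d := by
      have := hGle β
      rw [hβd] at this
      exact this
    have h2 := herase (fun γ => w β γ) (fun γ => rfl)
    have := add_le_add h1 h2
    refine this.trans ?_
    ring_nf
    nlinarith []
  · have : (d.factorial : ℝ) * (A - bco d c β) = - ∑ γ ∈ box β, w β γ * G γ := by
      rw [← hid]; ring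
    rw [this, hsplit]
    have h2 := herase (fun γ => - w β γ) (fun γ => abs_neg _)
    have h1 : - G β ≤ 0 := neg_nonpos_of_nonneg (hG0 β)
    have : - (G β + ∑ γ ∈ (box β).erase β, w β γ * G γ)
        = - G β + ∑ γ ∈ (box β).erase β, (- w β γ) * G γ := by
      rw [neg_add, ← Finset.sum_neg_distrib]
      congr 1
      exact Finset.sum_congr rfl fun γ _ => by ring
    rw [this]
    linarith [h1, h2]

lemma aux1 : ∀ k : ℕ, 1 + 2^(k+4) ≤ (k+3)^(k+3) := by
  intro k
  induction k with
  | zero => norm_num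
  | succ k ih =>
    show 1 + 2^(k+5) ≤ (k+4)^(k+4)
    have h1 : 1 + 2^(k+5) ≤ 2 * (1 + 2^(k+4)) := by ring_nf; omega
    have h2 : 2 * (1 + 2^(k+4)) ≤ 2 * (k+3)^(k+3) := by omega
    have h3 : 2 * (k+3)^(k+3) ≤ (k+4)^(k+4) := by
      calc 2 * (k+3)^(k+3) ≤ (k+4) * (k+4)^(k+3) :=
            Nat.mul_le_mul (by omega) (Nat.pow_le_pow_left (by omega) _)
        _ = (k+4)^(k+4) := by rw [← pow_succ']
    omega

lemma nat_ineq1 (d : ℕ) (hd : 1 ≤ d) :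
    d^d + 2^(d+1) * (d-1)^d ≤ d.factorial * ((2*d-1).choose d) * d^d := by
  by_cases hd3 : 3 ≤ d
  case neg =>
    push_neg at hd3
    interval_cases d <;> decide
  case pos =>
    have h1 : (d-1)^d ≤ d^d := Nat.pow_le_pow_left (by omega) d
    have h2 : 1 + 2^(d+1) ≤ d^d := by
      obtain ⟨k, rfl⟩ := Nat.exists_eq_add_of_le hd3
      rw [Nat.add_comm 3 k]
      have ha := aux1 k
      have hb : 2^(k+3+1) ≤ 2^(k+4) := Nat.pow_le_pow_right (by omega) (by omega)
      omega
    have h3 : d^d ≤ d.factorial * (2*d-1).choose d := by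
      have hdesc : d.factorial * (2*d-1).choose d = (2*d-1).descFactorial d :=
        (Nat.descFactorial_eq_factorial_mul_choose _ _).symm
      rw [hdesc, Nat.descFactorial_eq_prod_range]
      calc d^d = ∏ _i ∈ range d, d := by rw [Finset.prod_const, Finset.card_range]
        _ ≤ ∏ i ∈ range d, (2*d-1-i) := by
            apply Finset.prod_le_prod' 
            intro i hi
            rw [Finset.mem_range] at hi
            omega
    calc d^d + 2^(d+1) * (d-1)^d ≤ d^d + 2^(d+1) * d^d :=
          Nat.add_le_add_left (Nat.mul_le_mul_left _ h1) _
      _ = (1 + 2^(d+1)) * d^d := by ring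
      _ ≤ (d.factorial * (2*d-1).choose d) * d^d :=
          Nat.mul_le_mul_right _ (h2.trans h3)

lemma nat_AB (r : ℕ) : ∀ d, d ≤ r →
    (∏ i ∈ range d, (r-i)) ≤ (∏ i ∈ range d, (r+i)) ∧
      2 * r^d ≤ (∏ i ∈ range d, (r-i)) + (∏ i ∈ range d, (r+i)) := by
  intro d
  induction d with
  | zero => simp
  | succ d ih =>
    intro hd
    obtain ⟨hAB, hS⟩ := ih (by omega)
    set A := ∏ i ∈ range d, (r-i) with hAdef
    set B := ∏ i ∈ range d, (r+i) with hBdef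
    rw [Finset.prod_range_succ, Finset.prod_range_succ, pow_succ]
    constructor
    · exact Nat.mul_le_mul hAB (by omega)
    · have key : A * r = A * (r-d) + A * d := by
        rw [← Nat.mul_add, Nat.sub_add_cancel (by omega)]
      calc 2 * (r^d * r) = (2 * r^d) * r := by ring
        _ ≤ (A + B) * r := Nat.mul_le_mul_right _ hS
        _ = A * r + B * r := by ring
        _ = A * (r-d) + A * d + B * r := by rw [key]
        _ ≤ A * (r-d) + B * d + B * r := by
            have : A * d ≤ B * d := Nat.mul_le_mul_right _ hAB
            omega
        _ = A * (r-d) + B * (r+d) := by ring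

lemma nat_ineq2 (d r : ℕ) (hr : d ≤ r) :
    2 * r^d ≤ r.descFactorial d + (r+d-1).descFactorial d := by
  have h := (nat_AB r d hr).2
  rw [Nat.descFactorial_eq_prod_range, Nat.descFactorial_eq_prod_range]
  have h1 : ∏ i ∈ range d, (r+d-1-i) = ∏ i ∈ range d, (r + (d-1-i)) := by
    apply Finset.prod_congr rfl
    intro i hi; rw [Finset.mem_range] at hi; omega
  have h2 := Finset.prod_range_reflect (fun j => r + j) d
  rw [h1, h2]
  exact h

end S11

open S11

/-- for `f` homogeneous of degree `d ≥ 1` and `r ≥ d`,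
`f_{Δ(n,r)} − f_min^{(r−d)} ≤ [((r+d−1)^{(d)} − r^d)/r^{(d)}] C(2d−1,d) d^d (f̄ − f̲)`. -/
theorem statement11 (n d r : ℕ) (hn : 0 < n) (hd : 1 ≤ d) (hr : d ≤ r)
    (c : (Fin n → ℕ) → ℝ) :
    minGrid n r (homPoly n d c) - polyaBound n d r c ≤
      ((fall ((r : ℝ) + (d : ℝ) - 1) d - (r : ℝ) ^ d) / fall (r : ℝ) d) *
        (Nat.choose (2 * d - 1) d : ℝ) * (d : ℝ) ^ d *
        (maxSimplex n (homPoly n d c) - minSimplex n (homPoly n d c)) := by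
  classical
  have hr0 : 0 < r := by omega
  set A := minSimplex n (homPoly n d c) with hA
  set B := maxSimplex n (homPoly n d c) with hB
  have hgap : (0:ℝ) ≤ B - A := gap_nonneg hn c
  set R : ℝ := (r.descFactorial d : ℝ) with hRdef
  set Rise : ℝ := ((r+d-1).descFactorial d : ℝ) with hRisedef
  have hRpos : (0:ℝ) < R := by
    rw [hRdef]
    have : r.descFactorial d ≠ 0 := fun h0 => by
      have := Nat.descFactorial_eq_zero_iff_lt.1 h0; omega
    exact_mod_cast Nat.pos_of_ne_zero this
  have hfallr : fall (r:ℝ) d = R := fall_natCast r d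
  have hfallrise : fall ((r:ℝ) + (d:ℝ) - 1) d = Rise := by
    rw [show (r:ℝ) + (d:ℝ) - 1 = ((r+d-1 : ℕ) : ℝ) by
      push_cast [Nat.cast_sub (show 1 ≤ r + d by omega)]; ring]
    exact fall_natCast _ d
  -- polyaBound attained
  set val : (Fin n → ℕ) → ℝ := fun α =>
    (∑ β ∈ Finset.Nat.antidiagonalTuple n d,
      c β * ∏ i, fall ((α i : ℕ) : ℝ) (β i)) / fall (r : ℝ) d with hvaldef
  have hpolya : polyaBound n d r c = sInf (val '' {α : Fin n → ℕ | ∑ i, α i = r}) := rfl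
  have hsetfin : ({α : Fin n → ℕ | ∑ i, α i = r}).Finite := by
    apply Set.Finite.subset (Finset.Nat.antidiagonalTuple n r).finite_toSet
    intro α hα
    simpa [Finset.Nat.mem_antidiagonalTuple] using hα
  have hsetne : ({α : Fin n → ℕ | ∑ i, α i = r}).Nonempty := by
    refine ⟨fun i => if i = ⟨0, hn⟩ then r else 0, ?_⟩
    simp
  obtain ⟨αs, hαs, hαval⟩ := Set.Nonempty.csInf_mem
    (hsetne.image val) (hsetfin.image val)
  rw [Set.mem_setOf_eq] at hαs
  -- the grid point
  set xs : Fin n → ℝ := fun i => (αs i : ℝ) / r with hxs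
  have hxsimplex : xs ∈ stdSimplex ℝ (Fin n) := by
    constructor
    · intro i; rw [hxs]; positivity
    · rw [hxs, ← Finset.sum_div]
      rw [show ∑ i, ((αs i : ℕ) : ℝ) = ((∑ i, αs i : ℕ) : ℝ) by push_cast; rfl, hαs]
      field_simp
  have hxgrid : xs ∈ regularGrid n r := by
    refine ⟨hxsimplex, fun i => ⟨αs i, ?_⟩⟩
    rw [hxs]
    field_simp
  have hminle : minGrid n r (homPoly n d c) ≤ homPoly n d c xs := by
    have hbdd : BddBelow (homPoly n d c '' regularGrid n r) :=
      (image_simplex_compact n d c).bddBelow.mono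
        (Set.image_mono fun x hx => hx.1)
    exact csInf_le hbdd ⟨xs, hxgrid, rfl⟩
  -- notation for the β-indexed quantities
  set Ind := Finset.Nat.antidiagonalTuple n d with hInd
  set P : (Fin n → ℕ) → ℝ := fun β => ∏ i, ((αs i : ℝ)) ^ (β i) with hP
  set D : (Fin n → ℕ) → ℝ := fun β => ∏ i, (((αs i).descFactorial (β i) : ℕ) : ℝ) with hD
  set M : (Fin n → ℕ) → ℝ := fun β => (Nat.multinomial univ β : ℝ) with hM
  -- identify polyaBound with the explicit sum
  have hQ : polyaBound n d r c = (∑ β ∈ Ind, c β * D β) / R := by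
    rw [hpolya, ← hαval, hvaldef]
    dsimp only
    rw [← hfallr]
    congr 1
    apply Finset.sum_congr rfl
    intro β _
    congr 1
    rw [hD]
    exact Finset.prod_congr rfl fun i _ => fall_natCast (αs i) (β i)
  -- identify F xs
  have hFx : homPoly n d c xs = (∑ β ∈ Ind, c β * P β) / (r:ℝ)^d := by
    rw [homPoly, Finset.sum_div]
    apply Finset.sum_congr rfl
    intro β hβ
    have hβd : ∑ i, β i = d := Finset.Nat.mem_antidiagonalTuple.1 hβ
    rw [hxs, hP, mul_div_assoc]
    congr 1
    rw [show (∏ i, ((αs i : ℝ) / r) ^ β i)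
        = (∏ i, (αs i : ℝ) ^ β i) / ∏ i, ((r:ℝ)) ^ β i by
      rw [← Finset.prod_div_distrib]
      exact Finset.prod_congr rfl fun i _ => div_pow _ _ _]
    rw [Finset.prod_pow_eq_pow_sum, hβd]
  -- the two key sums
  have hsumP : ∑ β ∈ Ind, M β * P β = (r:ℝ)^d := by
    have h := sumA d αs
    rw [hαs] at h
    rw [hInd, hP, hM]
    dsimp only
    exact_mod_cast h
  have hsumD : ∑ β ∈ Ind, M β * D β = R := by
    have h := sumB d αs
    rw [hαs] at h
    rw [hInd, hD, hM, hRdef]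
    dsimp only
    push_cast
    exact_mod_cast h
  -- min and max of bco
  have hIndne : Ind.Nonempty := by
    refine ⟨fun i => if i = ⟨0, hn⟩ then d else 0, ?_⟩
    rw [hInd, Finset.Nat.mem_antidiagonalTuple]
    simp
  obtain ⟨βM, hβM, hMmax⟩ := Finset.exists_max_image Ind (bco d c) hIndne
  obtain ⟨βm, hβm, hmmin⟩ := Finset.exists_min_image Ind (bco d c) hIndne
  set KM := bco d c βM with hKM
  set Km := bco d c βm with hKm
  have hKMm : Km ≤ KM := (hmmin βM hβM).trans (le_refl _)
  -- Δ bound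
  have hrdpos : (0:ℝ) < (r:ℝ)^d := by positivity
  have hRle : R ≤ (r:ℝ)^d := by
    rw [hRdef]
    exact_mod_cast Nat.descFactorial_le_pow r d
  have hDP : ∀ β, D β ≤ P β := by
    intro β
    rw [hD, hP]
    apply Finset.prod_le_prod (fun i _ => by positivity)
    intro i _
    exact_mod_cast Nat.descFactorial_le_pow (αs i) (β i)
  have hPnn : ∀ β, 0 ≤ P β := fun β => Finset.prod_nonneg fun i _ => by positivity
  have hDnn : ∀ β, 0 ≤ D β := fun β => Finset.prod_nonneg fun i _ => by positivity
  have hMnn : ∀ β, 0 ≤ M β := fun β => by rw [hM]; positivity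
  -- s and q
  set sb : (Fin n → ℕ) → ℝ := fun β => M β * (P β / (r:ℝ)^d - D β / R) with hsb
  set qb : (Fin n → ℕ) → ℝ := fun β => M β * ((P β - D β) / R) with hqb
  have hsq : ∀ β, sb β ≤ qb β := by
    intro β
    apply mul_le_mul_of_nonneg_left _ (hMnn β)
    have : P β / (r:ℝ)^d ≤ P β / R := by
      apply div_le_div_of_nonneg_left (hPnn β) hRpos hRle
    have h2 : (P β - D β) / R = P β / R - D β / R := by ring
    rw [h2]
    linarith
  have hqnn : ∀ β, 0 ≤ qb β := by
    intro β
    apply mul_nonneg (hMnn β)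
    apply div_nonneg _ hRpos.le
    linarith [hDP β]
  have hsumq : ∑ β ∈ Ind, qb β = ((r:ℝ)^d - R) / R := by
    rw [hqb]
    have expand : ∀ β ∈ Ind, M β * ((P β - D β) / R)
        = (M β * P β) / R - (M β * D β) / R := fun β _ => by ring
    rw [Finset.sum_congr rfl expand, Finset.sum_sub_distrib,
      ← Finset.sum_div, ← Finset.sum_div, hsumP, hsumD]
    ring
  have hsums : ∑ β ∈ Ind, sb β = 0 := by
    rw [hsb]
    have expand : ∀ β ∈ Ind, M β * (P β / (r:ℝ)^d - D β / R)
        = (M β * P β) / (r:ℝ)^d - (M β * D β) / R := fun β _ => by ring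
    rw [Finset.sum_congr rfl expand, Finset.sum_sub_distrib,
      ← Finset.sum_div, ← Finset.sum_div, hsumP, hsumD]
    rw [div_self (ne_of_gt hrdpos), div_self (ne_of_gt hRpos)]
    ring
  have hdelta : homPoly n d c xs - polyaBound n d r c
      = ∑ β ∈ Ind, (bco d c β - Km) * sb β := by
    rw [hFx, hQ, Finset.sum_div, Finset.sum_div, ← Finset.sum_sub_distrib]
    have h1 : ∀ β ∈ Ind, c β * P β / (r:ℝ)^d - c β * D β / R = bco d c β * sb β := by
      intro β hβ
      have hβd : ∑ i, β i = d := Finset.Nat.mem_antidiagonalTuple.1 (hInd ▸ hβ)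
      have hc : M β * bco d c β = c β := mult_mul_bco c hβd
      rw [hsb, ← hc]
      dsimp only
      ring
    rw [Finset.sum_congr rfl h1]
    have h2 : ∀ β ∈ Ind, bco d c β * sb β = (bco d c β - Km) * sb β + Km * sb β :=
      fun β _ => by ring
    rw [Finset.sum_congr rfl h2, Finset.sum_add_distrib, ← Finset.mul_sum, hsums,
      mul_zero, add_zero]
  have hterm : ∀ β ∈ Ind, (bco d c β - Km) * sb β ≤ (KM - Km) * qb β := by
    intro β hβ
    have h0 : 0 ≤ bco d c β - Km := by have := hmmin β hβ; linarith
    have h1 : bco d c β - Km ≤ KM - Km := by have := hMmax β hβ; linarith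
    calc (bco d c β - Km) * sb β ≤ (bco d c β - Km) * qb β :=
          mul_le_mul_of_nonneg_left (hsq β) h0
      _ ≤ (KM - Km) * qb β := mul_le_mul_of_nonneg_right h1 (hqnn β)
  have hDelta_le : homPoly n d c xs - polyaBound n d r c
      ≤ (KM - Km) * (((r:ℝ)^d - R) / R) := by
    rw [hdelta]
    calc ∑ β ∈ Ind, (bco d c β - Km) * sb β ≤ ∑ β ∈ Ind, (KM - Km) * qb β :=
          Finset.sum_le_sum hterm
      _ = (KM - Km) * ∑ β ∈ Ind, qb β := by rw [← Finset.mul_sum]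
      _ = (KM - Km) * (((r:ℝ)^d - R) / R) := by rw [hsumq]
  -- bound on KM - Km
  have hβMd : ∑ i, βM i = d := Finset.Nat.mem_antidiagonalTuple.1 (hInd ▸ hβM)
  have hβmd : ∑ i, βm i = d := Finset.Nat.mem_antidiagonalTuple.1 (hInd ▸ hβm)
  have hu := (bco_bounds hn hd c hβMd).1
  have hl := (bco_bounds hn hd c hβmd).2
  have hKgap : (d.factorial : ℝ) * (KM - Km)
      ≤ (B - A) * ((d:ℝ)^d + 2^(d+1) * (((d-1:ℕ)):ℝ)^d) := by
    have hsplit : (d.factorial : ℝ) * (KM - Km)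
        = (d.factorial : ℝ) * (KM - A) + (d.factorial : ℝ) * (A - Km) := by ring
    rw [hsplit]
    have := add_le_add hu hl
    refine this.trans (le_of_eq ?_)
    rw [pow_succ]
    ring
  have hnum : ((d:ℝ)^d + 2^(d+1) * (((d-1:ℕ)):ℝ)^d)
      ≤ (d.factorial : ℝ) * ((2*d-1).choose d : ℝ) * (d:ℝ)^d := by
    exact_mod_cast nat_ineq1 d hd
  have hdfpos : (0:ℝ) < (d.factorial : ℝ) := by positivity
  have hKle : KM - Km ≤ (B - A) * ((2*d-1).choose d : ℝ) * (d:ℝ)^d := by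
    have h2 : (d.factorial : ℝ) * (KM - Km)
        ≤ (d.factorial : ℝ) * ((B - A) * ((2*d-1).choose d : ℝ) * (d:ℝ)^d) := by
      refine hKgap.trans ?_
      have := mul_le_mul_of_nonneg_left hnum hgap
      refine this.trans (le_of_eq ?_)
      ring
    exact le_of_mul_le_mul_left h2 hdfpos
  have hRR : (r:ℝ)^d - R ≤ Rise - (r:ℝ)^d := by
    have h := nat_ineq2 d r hr
    have : 2 * (r:ℝ)^d ≤ R + Rise := by
      rw [hRdef, hRisedef]
      exact_mod_cast h
    linarith
  have hratio_nn : (0:ℝ) ≤ ((r:ℝ)^d - R) / R := by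
    apply div_nonneg _ hRpos.le
    linarith [hRle]
  have hCd_nn : (0:ℝ) ≤ (B - A) * ((2*d-1).choose d : ℝ) * (d:ℝ)^d := by positivity
  have hfinal : homPoly n d c xs - polyaBound n d r c
      ≤ ((Rise - (r:ℝ)^d) / R) * ((2*d-1).choose d : ℝ) * (d:ℝ)^d * (B - A) := by
    refine hDelta_le.trans ?_
    calc (KM - Km) * (((r:ℝ)^d - R) / R)
        ≤ ((B - A) * ((2*d-1).choose d : ℝ) * (d:ℝ)^d) * (((r:ℝ)^d - R) / R) :=
          mul_le_mul_of_nonneg_right hKle hratio_nn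
      _ ≤ ((B - A) * ((2*d-1).choose d : ℝ) * (d:ℝ)^d) * (((Rise - (r:ℝ)^d)) / R) := by
          apply mul_le_mul_of_nonneg_left _ hCd_nn
          exact (div_le_div_iff_of_pos_right hRpos).2 hRR
      _ = ((Rise - (r:ℝ)^d) / R) * ((2*d-1).choose d : ℝ) * (d:ℝ)^d * (B - A) := by ring
  rw [hfallrise, hfallr]
  linarith [hminle, hfinal]
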